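/- Let $R$ be a Dedekind domain of characteristic $0$ with fraction field $F$ and let $\mathfrak{A}$ be a Gorenstein $R$-order in a finite-dimensional separable commutative $F$-algebra. Then every short exact sequence of finitely generated $\mathfrak{A}$-modules $0 \to P \to X \to Q \to 0$ in which $P$ is free and $Q$ is $R$-torsion-free splits. -/

import Mathlib

open CategoryTheory Opposite

universe u


lemma aux_exactness (S : Type u) [CommRing S] (Q : Type u) [AddCommGroup Q] [Module S Q]
    (hExt : Subsingleton (((Ext S (ModuleCat.{u} S) 1).obj (op (ModuleCat.of S Q))).obj
      (ModuleCat.of S S)))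
    (Pr : ProjectiveResolution (ModuleCat.of S Q)) :
    ∀ φ : Pr.complex.X 1 ⟶ ModuleCat.of S S, Pr.complex.d 2 1 ≫ φ = 0 →
      ∃ ψ : Pr.complex.X 0 ⟶ ModuleCat.of S S, Pr.complex.d 1 0 ≫ ψ = φ := by
  have e := Pr.isoExt (R := S) 1 (ModuleCat.of S S)
  have hsub : Subsingleton ((Pr.complex.linearYonedaObj S (ModuleCat.of S S)).homology 1) := by
    have := ((forget _).mapIso e).toEquiv
    exact this.symm.subsingleton
  have hzero : Limits.IsZero ((Pr.complex.linearYonedaObj S (ModuleCat.of S S)).homology 1) :=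
    ModuleCat.isZero_of_subsingleton _
  have hexact : (Pr.complex.linearYonedaObj S (ModuleCat.of S S)).ExactAt 1 :=
    (HomologicalComplex.exactAt_iff_isZero_homology _ 1).2 hzero
  rw [(Pr.complex.linearYonedaObj S (ModuleCat.of S S)).exactAt_iff' 0 1 2 (by simp) (by simp)]
    at hexact
  rw [ShortComplex.moduleCat_exact_iff] at hexact
  intro φ hφ
  obtain ⟨ψ, hψ⟩ := hexact φ (by
    show (Pr.complex.linearYonedaObj S (ModuleCat.of S S)).d 1 2 φ = 0
    simp only [ChainComplex.linearYonedaObj_d]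
    exact hφ)
  refine ⟨ψ, ?_⟩
  exact hψ

lemma aux_split (S : Type u) [CommRing S]
    (P X Q : Type u) [AddCommGroup P] [Module S P] [AddCommGroup X] [Module S X]
    [AddCommGroup Q] [Module S Q] [Module.Free S P] [Module.Finite S P]
    (hExt : Subsingleton (((Ext S (ModuleCat.{u} S) 1).obj (op (ModuleCat.of S Q))).obj
      (ModuleCat.of S S)))
    (f : P →ₗ[S] X) (g : X →ₗ[S] Q)
    (hf : Function.Injective f) (hg : Function.Surjective g)
    (hexact : LinearMap.range f = LinearMap.ker g) :
    ∃ s : Q →ₗ[S] X, g ∘ₗ s = LinearMap.id := by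
  classical
  set Qc : ModuleCat.{u} S := ModuleCat.of S Q with hQc
  obtain ⟨Pr⟩ := (inferInstance : HasProjectiveResolution Qc).out
  set P0 : ModuleCat.{u} S := Pr.complex.X 0 with hP0
  set P1 : ModuleCat.{u} S := Pr.complex.X 1 with hP1
  set d1 : P1 ⟶ P0 := Pr.complex.d 1 0 with hd1
  set ε : P0 ⟶ Qc := Pr.π.f 0 with hε
  -- view ε as a linear map into Q
  have hproj : Module.Projective S (P0 : Type u) := by
    rw [IsProjective.iff_projective]
    show Projective P0
    infer_instance
  let εl : (P0 : Type u) →ₗ[S] Q := by exact ε.hom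
  -- lift ε through g
  obtain ⟨hl, hhl⟩ := Module.projective_lifting_property g εl hg
  have hhl' : ∀ x : P0, g (hl x) = εl x := fun x => LinearMap.congr_fun hhl x
  -- ε kills the image of d1
  have hεd1 : ∀ x : P1, εl (d1 x) = 0 := by
    intro x
    exact congrFun (congrArg (fun (m : P1 ⟶ Qc) => (⇑m : P1 → Q))
      Pr.complex_d_comp_π_f_zero) x
  -- hl ∘ d1 lands in range f
  have hmem : ∀ x : P1, hl (d1 x) ∈ LinearMap.range f := by
    intro x
    rw [hexact, LinearMap.mem_ker, hhl', hεd1]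
  -- φ : P1 →ₗ P with f ∘ φ = hl ∘ d1
  let eqv := LinearEquiv.ofInjective f hf
  let d1l : (P1 : Type u) →ₗ[S] (P0 : Type u) := by exact d1.hom
  let φ : (P1 : Type u) →ₗ[S] P := eqv.symm.toLinearMap ∘ₗ
    LinearMap.codRestrict (LinearMap.range f) (hl ∘ₗ d1l) (fun c => hmem c)
  have hφ : ∀ x : P1, f (φ x) = hl (d1 x) := by
    intro x
    show f (eqv.symm ⟨hl (d1 x), hmem x⟩) = hl (d1 x)
    exact congrArg Subtype.val (eqv.apply_symm_apply ⟨hl (d1 x), hmem x⟩)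
  -- φ kills d2
  have hd2d1 : ∀ y : Pr.complex.X 2, d1 (Pr.complex.d 2 1 y) = 0 := by
    intro y
    exact congrFun (congrArg (fun (m : Pr.complex.X 2 ⟶ P0) => (⇑m : Pr.complex.X 2 → P0))
      (Pr.complex.d_comp_d 2 1 0)) y
  have hφd2 : ∀ y : Pr.complex.X 2, φ (Pr.complex.d 2 1 y) = 0 := by
    intro y
    apply hf
    rw [hφ, map_zero, hd2d1, map_zero]
  -- componentwise extension using the basis of P
  let ι := Module.Free.ChooseBasisIndex S P
  let b : Module.Basis ι S P := Module.Free.chooseBasis S P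
  have key : ∀ i : ι, ∃ ψi : (P0 : Type u) →ₗ[S] S,
      ∀ x : P1, ψi (d1 x) = b.coord i (φ x) := by
    intro i
    obtain ⟨ψi, hψi⟩ := aux_exactness S Q hExt Pr
      (by exact ModuleCat.ofHom (b.coord i ∘ₗ φ) : P1 ⟶ ModuleCat.of S S)
      (by
        apply ModuleCat.hom_ext
        apply LinearMap.ext
        intro y
        show b.coord i (φ (Pr.complex.d 2 1 y)) = 0
        rw [hφd2, map_zero])
    refine ⟨by exact ψi.hom, fun x => ?_⟩
    exact congrFun (congrArg (fun (m : P1 ⟶ ModuleCat.of S S) => (⇑m : P1 → S)) hψi) x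
  choose ψi hψi using key
  -- assemble ψ : P0 →ₗ P
  let ψ : (P0 : Type u) →ₗ[S] P := ∑ i : ι, (LinearMap.toSpanSingleton S P (b i)) ∘ₗ ψi i
  have hψ : ∀ x : P1, ψ (d1 x) = φ x := by
    intro x
    have h1 : ψ (d1 x) = ∑ i : ι, ψi i (d1 x) • b i := by
      rw [LinearMap.sum_apply]
      rfl
    rw [h1]
    have h2 : ∀ i : ι, ψi i (d1 x) • b i = b.coord i (φ x) • b i := by
      intro i; rw [hψi i x]
    rw [Finset.sum_congr rfl (fun i _ => h2 i)]
    exact b.sum_repr (φ x)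
  -- corrected lift
  let h' : (P0 : Type u) →ₗ[S] X := hl - f ∘ₗ ψ
  have hd1h' : ∀ x : P1, h' (d1 x) = 0 := by
    intro x
    show hl (d1 x) - f (ψ (d1 x)) = 0
    rw [hψ, hφ, sub_self]
  have hgh' : ∀ x : P0, g (h' x) = εl x := by
    intro x
    show g (hl x - f (ψ x)) = εl x
    rw [map_sub]
    have h1 : g (f (ψ x)) = 0 := by
      have : f (ψ x) ∈ LinearMap.ker g := hexact ▸ LinearMap.mem_range_self f (ψ x)
      exact this
    rw [h1, sub_zero, hhl']
  -- descend through the cokernel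
  let h'c : P0 ⟶ ModuleCat.of S X := by exact ModuleCat.ofHom h'
  have hcond : Pr.complex.d 1 0 ≫ h'c = 0 ≫ h'c := by
    rw [Limits.zero_comp]
    apply ModuleCat.hom_ext
    apply LinearMap.ext
    intro x
    exact hd1h' x
  obtain ⟨s, hs⟩ : { l : Qc ⟶ ModuleCat.of S X // ε ≫ l = h'c } := Limits.Cofork.IsColimit.desc' Pr.isColimitCokernelCofork h'c
    (by rw [hcond, Limits.zero_comp])
  have hεs : ε ≫ s = h'c := hs
  -- gc as morphism, to cancel the epi ε
  let gc : ModuleCat.of S X ⟶ Qc := by exact ModuleCat.ofHom g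
  have hsg : s ≫ gc = 𝟙 Qc := by
    have hepi : Epi ε := by exact Limits.epi_of_isColimit_cofork Pr.isColimitCokernelCofork
    rw [← cancel_epi ε, Category.comp_id, ← Category.assoc, hεs]
    apply ModuleCat.hom_ext
    apply LinearMap.ext
    intro x
    exact hgh' x
  refine ⟨by exact s.hom, ?_⟩
  apply LinearMap.ext
  intro q
  exact congrFun (congrArg (fun (m : Qc ⟶ Qc) => (⇑m : Q → Q)) hsg) q

/-- Let `R` be a Dedekind domain of characteristic `0` with fraction field
`F` and let `𝔄` be a Gorenstein `R`-order in a finite-dimensional separable commutative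
`F`-algebra `A` (Gorenstein meaning `Ext¹_𝔄(N, 𝔄) = 0` for all finitely generated
`R`-torsion-free `𝔄`-modules `N`). Then every short exact sequence
`0 → P → X → Q → 0` of finitely generated `𝔄`-modules in which `P` is free and `Q` is
`R`-torsion-free splits. -/
theorem ses_with_free_kernel_and_torsionFree_quotient_splits
    (R : Type u) [CommRing R] [IsDedekindDomain R] [CharZero R]
    (F : Type u) [Field F] [Algebra R F] [IsFractionRing R F]
    (A : Type u) [CommRing A] [Algebra F A] [FiniteDimensional F A] [Algebra.IsSeparable F A]
    [Algebra R A] [IsScalarTower R F A]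
    (𝔄 : Type u) [CommRing 𝔄] [Algebra R 𝔄] [Module.Finite R 𝔄]
    [Algebra 𝔄 A] [IsScalarTower R 𝔄 A]
    (hinj : Function.Injective (algebraMap 𝔄 A))
    (hspan : Submodule.span F (Set.range (algebraMap 𝔄 A)) = ⊤)
    (hGor : ∀ (N : Type u) [AddCommGroup N] [Module 𝔄 N] [Module R N] [IsScalarTower R 𝔄 N],
      Module.Finite 𝔄 N → (∀ (r : R) (n : N), r • n = 0 → r = 0 ∨ n = 0) →
      Subsingleton (((Ext 𝔄 (ModuleCat.{u} 𝔄) 1).obj (op (ModuleCat.of 𝔄 N))).obj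
        (ModuleCat.of 𝔄 𝔄)))
    (P X Q : Type u) [AddCommGroup P] [Module 𝔄 P] [AddCommGroup X] [Module 𝔄 X]
    [AddCommGroup Q] [Module 𝔄 Q]
    [Module.Free 𝔄 P] [Module.Finite 𝔄 P] [Module.Finite 𝔄 X] [Module.Finite 𝔄 Q]
    [Module R Q] [IsScalarTower R 𝔄 Q]
    (hQtf : ∀ (r : R) (q : Q), r • q = 0 → r = 0 ∨ q = 0)
    (f : P →ₗ[𝔄] X) (g : X →ₗ[𝔄] Q)
    (hf : Function.Injective f) (hg : Function.Surjective g)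
    (hexact : LinearMap.range f = LinearMap.ker g) :
    ∃ s : Q →ₗ[𝔄] X, g ∘ₗ s = LinearMap.id := by
  exact aux_split 𝔄 P X Q (hGor Q ‹Module.Finite 𝔄 Q› hQtf) f g hf hg hexact
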